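/- Let (Q,R) be a gentle presentation satisfying the no-relation-free-cycle condition. Let w be a string of length ≥ 1 and let a be an arrow of Q such that the walk a·w is a string. Suppose there exists an arrow b with b ≠ a and s(b) = s(a). Then there is a unique maximal R-avoiding directed path v whose first arrow is b, and the walk v⁻¹·a·w (the inverse walk of v, followed by a, followed by w) is a string. Hence the operation of adding a hook at the starting point of w, producing the string w_ℓ = v⁻¹ a w, is well defined. -/

import Mathlib

/-- A letter of the double quiver: an arrow `a` together with a direction, `true` for
the direct letter `a` and `false` for the formal inverse `a⁻¹`. -/
abbrev Letter (A : Type*) := A × Bool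

/-- Source of a letter of the double quiver: `s(a)` for `a`, `t(a)` for `a⁻¹`. -/
def srcL {V A : Type*} (s t : A → V) (x : Letter A) : V :=
  if x.2 then s x.1 else t x.1

/-- Target of a letter of the double quiver: `t(a)` for `a`, `s(a)` for `a⁻¹`. -/
def tgtL {V A : Type*} (s t : A → V) (x : Letter A) : V :=
  if x.2 then t x.1 else s x.1

/-- Two consecutive letters `x, y` are allowed in a string: they are composable in the
double quiver, the pair is reduced (not of the form `a a⁻¹` or `a⁻¹ a`), and it avoids
the relations (`a b` with `(a,b) ∈ R` and `b⁻¹ a⁻¹` with `(a,b) ∈ R` are forbidden). -/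
def StringPair {V A : Type*} (s t : A → V) (R : Set (A × A)) (x y : Letter A) : Prop :=
  tgtL s t x = srcL s t y ∧
  ¬ (x.1 = y.1 ∧ x.2 ≠ y.2) ∧
  (x.2 = true → y.2 = true → (x.1, y.1) ∉ R) ∧
  (x.2 = false → y.2 = false → (y.1, x.1) ∉ R)

/-- `w` is a string of `(Q, R)` of length ≥ 1. -/
def IsStringWord {V A : Type*} (s t : A → V) (R : Set (A × A))
    (w : List (Letter A)) : Prop :=
  w ≠ [] ∧ w.Chain' (StringPair s t R)

/-- `p` is a directed path in `Q`. -/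
def IsDirPath {V A : Type*} (s t : A → V) (p : List A) : Prop :=
  p ≠ [] ∧ p.Chain' (fun a b => t a = s b)

/-- `p` avoids the set of quadratic relations `R`. -/
def AvoidsRel {A : Type*} (R : Set (A × A)) (p : List A) : Prop :=
  p.Chain' (fun a b => (a, b) ∉ R)

/-- `p` contains a consecutive pair of arrows belonging to `R`. -/
def HasRelPair {A : Type*} (R : Set (A × A)) (p : List A) : Prop :=
  ∃ (i : ℕ) (h : i + 1 < p.length),
    (p.get ⟨i, Nat.lt_of_succ_lt h⟩, p.get ⟨i + 1, h⟩) ∈ R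

/-- No arrow can be appended to `p` so that it stays an `R`-avoiding directed path. -/
def RightMax {V A : Type*} (s t : A → V) (R : Set (A × A)) (p : List A) : Prop :=
  ∀ c : A, ¬ (IsDirPath s t (p ++ [c]) ∧ AvoidsRel R (p ++ [c]))

/-- The inverse walk `p⁻¹` of a directed path `p = b₁ ⋯ bₖ` of `Q`, as a word in the
double quiver: `bₖ⁻¹ ⋯ b₁⁻¹`. -/
def invWalk {A : Type*} (p : List A) : List (Letter A) :=
  (p.map (fun b => ((b, false) : Letter A))).reverse

theorem List.chain'_iff_get {α : Type*} {R : α → α → Prop} {l : List α} :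
    List.Chain' R l ↔ ∀ (i : ℕ) (h : i < l.length - 1),
      R (l.get ⟨i, by omega⟩) (l.get ⟨i + 1, by omega⟩) := by
  show List.IsChain R l ↔ _
  rw [List.isChain_iff_getElem]
  simp only [List.get_eq_getElem]
  exact ⟨fun h i hi => h i (by omega), fun h i hi => h i (by omega)⟩

theorem List.chain'_cons {α : Type*} {R : α → α → Prop} {x y : α} {l : List α} :
    List.Chain' R (x :: y :: l) ↔ R x y ∧ List.Chain' R (y :: l) :=
  List.isChain_cons_cons

theorem List.chain'_pair {α : Type*} {R : α → α → Prop} {x y : α} :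
    List.Chain' R [x, y] ↔ R x y :=
  List.isChain_pair

@[simp] theorem List.chain'_singleton {α : Type*} {R : α → α → Prop} (x : α) :
    List.Chain' R [x] :=
  List.isChain_singleton x

theorem List.chain'_append {α : Type*} {R : α → α → Prop} {l₁ l₂ : List α} :
    List.Chain' R (l₁ ++ l₂) ↔ List.Chain' R l₁ ∧ List.Chain' R l₂ ∧
      ∀ x ∈ l₁.getLast?, ∀ y ∈ l₂.head?, R x y :=
  List.isChain_append

theorem List.chain'_reverse {α : Type*} {R : α → α → Prop} {l : List α} :
    List.Chain' R l.reverse ↔ List.Chain' (flip R) l :=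
  List.isChain_reverse

theorem List.chain'_map {α β : Type*} {R : α → α → Prop} (f : β → α) {l : List β} :
    List.Chain' R (List.map f l) ↔ List.Chain' (fun a b => R (f a) (f b)) l :=
  List.isChain_map f

theorem List.getLast_eq_get {α : Type*} (l : List α) (h : l ≠ []) :
    l.getLast h = l.get ⟨l.length - 1, by
      cases l with
      | nil => exact absurd rfl h
      | cons a l => simp⟩ := by
  rw [List.getLast_eq_getElem]; rfl

section Helpers
variable {V A : Type*} (s t : A → V) (R : Set (A × A))

lemma avoid_nodup
    (hcyc : ∀ (p : List A) (hp : p ≠ []), p.Chain' (fun a b => t a = s b) →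
      s (p.head hp) = t (p.getLast hp) → HasRelPair R p)
    {p : List A} (hdir : p.Chain' (fun a b => t a = s b)) (hav : AvoidsRel R p) :
    p.Nodup := by
  have key : ∀ i j : Fin p.length, (i : ℕ) < (j : ℕ) → p.get i = p.get j → False := by
    intro i j hlt hij
    have hi := i.isLt
    have hj := j.isLt
    set q := (p.drop i.val).take (j.val - i.val) with hqdef
    have hlen : q.length = j.val - i.val := by
      simp only [hqdef, List.length_take, List.length_drop]
      omega
    have hget : ∀ k (hk : k < q.length),
        q.get ⟨k, hk⟩ = p.get ⟨i.val + k, by omega⟩ := by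
      intro k hk
      simp only [hqdef, List.get_eq_getElem, List.getElem_take, List.getElem_drop]
    have hqne : q ≠ [] := by
      intro h; rw [h] at hlen; simp at hlen; omega
    have hchain : q.Chain' (fun a b => t a = s b) := by
      rw [List.chain'_iff_get] at hdir ⊢
      intro k hk
      rw [hget k (by omega), hget (k+1) (by omega)]
      exact hdir (i.val + k) (by omega)
    have hhead : q.head hqne = p.get i := by
      rw [← List.get_mk_zero (by rw [hlen]; omega), hget 0 (by rw [hlen]; omega)]
      congr 1
    have hlast : q.getLast hqne = p.get ⟨j.val - 1, by omega⟩ := by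
      rw [List.getLast_eq_get, hget (q.length - 1) (by rw [hlen]; omega)]
      congr 1
      exact Fin.ext (by simp [hlen]; omega)
    have hclose : s (q.head hqne) = t (q.getLast hqne) := by
      rw [hhead, hlast, hij]
      rw [List.chain'_iff_get] at hdir
      have h2 := hdir (j.val - 1) (by omega)
      have hfin : (⟨j.val - 1 + 1, by omega⟩ : Fin p.length) = j := Fin.ext (by simp only [Fin.val_mk]; omega)
      rw [hfin] at h2
      exact h2.symm
    obtain ⟨m, hm, hmem⟩ := hcyc q hqne hchain hclose
    rw [hget m (by omega), hget (m+1) (by omega)] at hmem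
    unfold AvoidsRel at hav
    rw [List.chain'_iff_get] at hav
    exact hav (i.val + m) (by omega) hmem
  rw [List.nodup_iff_injective_get]
  intro i j hij
  by_contra hne
  have hne' : (i : ℕ) ≠ (j : ℕ) := fun h => hne (Fin.ext h)
  rcases Nat.lt_or_ge (i : ℕ) (j : ℕ) with h | h
  · exact key i j h hij
  · exact key j i (by omega) hij.symm

lemma exists_max
    (hcyc : ∀ (p : List A) (hp : p ≠ []), p.Chain' (fun a b => t a = s b) →
      s (p.head hp) = t (p.getLast hp) → HasRelPair R p)
    [Fintype A] (b : A) :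
    ∃ v : List A, v.head? = some b ∧ IsDirPath s t v ∧ AvoidsRel R v ∧
      RightMax s t R v := by
  classical
  set S : Set (List A) := {v | v.head? = some b ∧ IsDirPath s t v ∧ AvoidsRel R v}
    with hS
  have hbS : [b] ∈ S := ⟨rfl, ⟨by simp, by simp⟩, by simp [AvoidsRel]⟩
  set L : Set ℕ := (fun v : List A => v.length) '' S with hL
  have hLne : L.Nonempty := ⟨1, [b], hbS, rfl⟩
  have hLbdd : BddAbove L := by
    refine ⟨Fintype.card A, ?_⟩
    rintro n ⟨v, hv, rfl⟩
    exact (avoid_nodup s t R hcyc hv.2.1.2 hv.2.2).length_le_card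
  obtain ⟨v, hvS, hvlen⟩ := Nat.sSup_mem hLne hLbdd
  refine ⟨v, hvS.1, hvS.2.1, hvS.2.2, ?_⟩
  rintro c ⟨hdir, hav⟩
  have hmem : v ++ [c] ∈ S := by
    refine ⟨?_, hdir, hav⟩
    rw [List.head?_append, hvS.1]
    rfl
  have hle : (v ++ [c]).length ≤ sSup L := le_csSup hLbdd ⟨_, hmem, rfl⟩
  rw [← hvlen] at hle
  simp at hle

lemma max_unique
    (hG2r : ∀ a b₁ b₂ : A, t a = s b₁ → t a = s b₂ →
      (a, b₁) ∉ R → (a, b₂) ∉ R → b₁ = b₂) :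
    ∀ v : List A, IsDirPath s t v → AvoidsRel R v → RightMax s t R v →
    ∀ v' : List A, IsDirPath s t v' → AvoidsRel R v' → RightMax s t R v' →
    v.head? = v'.head? → v = v' := by
  intro v
  induction v with
  | nil => intro hdir; exact absurd rfl hdir.1
  | cons c p ih =>
    intro hdir hav hmax v' hdir' hav' hmax' hhd
    cases v' with
    | nil => exact absurd rfl hdir'.1
    | cons c' p' =>
      simp only [List.head?_cons, Option.some_inj] at hhd
      subst hhd
      cases p with
      | nil =>
        cases p' with
        | nil => rfl
        | cons d q' =>
          exfalso
          apply hmax d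
          have h1 : t c = s d := (List.chain'_cons.mp hdir'.2).1
          have h2 : (c, d) ∉ R := (List.chain'_cons.mp hav').1
          exact ⟨⟨by simp, List.chain'_pair.mpr h1⟩, List.chain'_pair.mpr h2⟩
      | cons d q =>
        cases p' with
        | nil =>
          exfalso
          apply hmax' d
          have h1 : t c = s d := (List.chain'_cons.mp hdir.2).1
          have h2 : (c, d) ∉ R := (List.chain'_cons.mp hav).1
          exact ⟨⟨by simp, List.chain'_pair.mpr h1⟩, List.chain'_pair.mpr h2⟩
        | cons d' q' =>
          have h1 : t c = s d := (List.chain'_cons.mp hdir.2).1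
          have h1' : t c = s d' := (List.chain'_cons.mp hdir'.2).1
          have h2 : (c, d) ∉ R := (List.chain'_cons.mp hav).1
          have h2' : (c, d') ∉ R := (List.chain'_cons.mp hav').1
          have hdd : d = d' := hG2r c d d' h1 h1' h2 h2'
          subst hdd
          have htail : ∀ (r : List A), IsDirPath s t (c :: d :: r) →
              AvoidsRel R (c :: d :: r) → RightMax s t R (c :: d :: r) →
              RightMax s t R (d :: r) := by
            intro r hdirr havr hmaxr e he
            apply hmaxr e
            refine ⟨⟨by simp, ?_⟩, ?_⟩
            · rw [List.cons_append, List.cons_append, List.chain'_cons]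
              exact ⟨(List.chain'_cons.mp hdirr.2).1, he.1.2⟩
            · unfold AvoidsRel
              rw [List.cons_append, List.cons_append, List.chain'_cons]
              exact ⟨(List.chain'_cons.mp havr).1, he.2⟩
          have := ih ⟨by simp, (List.chain'_cons.mp hdir.2).2⟩
            (List.chain'_cons.mp hav).2 (htail q hdir hav hmax)
            (d :: q') ⟨by simp, (List.chain'_cons.mp hdir'.2).2⟩
            (List.chain'_cons.mp hav').2 (htail q' hdir' hav' hmax') rfl
          rw [this]

end Helpers

/-- Let `(Q, R)` be a gentle presentation satisfying the no-relation-free-cycle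
condition.  Let `w` be a string of length ≥ 1 and `a` an arrow such that `a·w` is a
string.  Suppose there is an arrow `b ≠ a` with `s b = s a`.  Then there is a unique
maximal `R`-avoiding directed path `v` whose first arrow is `b`, and the walk
`v⁻¹ · a · w` is a string.  Hence adding a hook at the starting point of `w`,
producing `w_ℓ = v⁻¹ a w`, is well defined. -/
theorem add_hook_well_defined
    {V A : Type*} [Fintype V] [Fintype A]
    (s t : A → V) (R : Set (A × A))
    -- (Q,R) is a gentle presentation:
    (hRcomp : ∀ r ∈ R, t r.1 = s r.2)
    (hG1s : ∀ (v : V) (a b c : A), s a = v → s b = v → s c = v → a = b ∨ a = c ∨ b = c)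
    (hG1t : ∀ (v : V) (a b c : A), t a = v → t b = v → t c = v → a = b ∨ a = c ∨ b = c)
    (hG2r : ∀ a b₁ b₂ : A, t a = s b₁ → t a = s b₂ →
      (a, b₁) ∉ R → (a, b₂) ∉ R → b₁ = b₂)
    (hG2l : ∀ a c₁ c₂ : A, t c₁ = s a → t c₂ = s a →
      (c₁, a) ∉ R → (c₂, a) ∉ R → c₁ = c₂)
    (hG3r : ∀ a b₁ b₂ : A, (a, b₁) ∈ R → (a, b₂) ∈ R → b₁ = b₂)
    (hG3l : ∀ a c₁ c₂ : A, (c₁, a) ∈ R → (c₂, a) ∈ R → c₁ = c₂)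
    -- the no-relation-free-cycle condition:
    (hcyc : ∀ (p : List A) (hp : p ≠ []), p.Chain' (fun a b => t a = s b) →
      s (p.head hp) = t (p.getLast hp) → HasRelPair R p)
    (w : List (Letter A)) (hw : IsStringWord s t R w)
    (a : A) (haw : IsStringWord s t R ((a, true) :: w))
    (b : A) (hba : b ≠ a) (hbs : s b = s a) :
    (∃! v : List A, v.head? = some b ∧ IsDirPath s t v ∧ AvoidsRel R v ∧
      RightMax s t R v) ∧
    (∀ v : List A, v.head? = some b → IsDirPath s t v → AvoidsRel R v →
      RightMax s t R v →
      IsStringWord s t R (invWalk v ++ (a, true) :: w)) := by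
  constructor
  · obtain ⟨v, hv1, hv2, hv3, hv4⟩ := exists_max s t R hcyc b
    refine ⟨v, ⟨hv1, hv2, hv3, hv4⟩, ?_⟩
    rintro v' ⟨hv1', hv2', hv3', hv4'⟩
    exact max_unique s t R hG2r v' hv2' hv3' hv4' v hv2 hv3 hv4 (by rw [hv1, hv1'])
  · intro v hhd hdir hav _hmax
    refine ⟨by simp, ?_⟩
    rw [List.chain'_append]
    refine ⟨?_, haw.2, ?_⟩
    · unfold invWalk
      rw [List.chain'_reverse, List.chain'_map]
      obtain ⟨hdne, hdchain⟩ := hdir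
      rw [List.chain'_iff_get] at hdchain ⊢
      have havg := hav
      unfold AvoidsRel at havg
      rw [List.chain'_iff_get] at havg
      intro k hk
      refine ⟨?_, ?_, ?_, ?_⟩
      · simp only [tgtL, srcL]
        exact (hdchain k hk).symm
      · simp
      · simp
      · intro _ _
        exact havg k hk
    · intro x hx y hy
      unfold invWalk at hx
      rw [List.getLast?_reverse, List.head?_map, hhd] at hx
      simp only [Option.map_some, Option.mem_def, Option.some_inj] at hx
      simp only [List.head?_cons, Option.mem_def, Option.some_inj] at hy
      subst hx hy
      refine ⟨?_, ?_, ?_, ?_⟩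
      · simp only [tgtL, srcL, if_neg Bool.false_ne_true, if_pos rfl]
        exact hbs
      · simp only [ne_eq, not_and]
        intro h; exact absurd h hba
      · intro h; exact absurd h (by simp)
      · intro _ h; exact absurd h (by simp)
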